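/- arXiv:0906.4157 — 3 statements merged into one kernel-verified Lean document; each statement's English description precedes it below -/
import Mathlib

section
/- Let A, B, C be positive real-valued functions solving the normalized Ricci flow ODE system (⋆) on an open interval I containing 0. Then the product A(t)B(t)C(t) is constant on I; that is, A(t)B(t)C(t) = A(0)B(0)C(0) for all t ∈ I. -/
open Real Filter Set Topology

/-- Right-hand side of the normalized Ricci flow ODE (⋆) for `A`. -/
noncomputable def ricciA (A B C : ℝ) : ℝ :=
  (2 / 3) * (-A ^ 2 * (2 * A + B + C) + A * (B - C) ^ 2)

/-- Right-hand side of the normalized Ricci flow ODE (⋆) for `B`. -/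
noncomputable def ricciB (A B C : ℝ) : ℝ :=
  (2 / 3) * (-B ^ 2 * (2 * B + A - C) + B * (A + C) ^ 2)

/-- Right-hand side of the normalized Ricci flow ODE (⋆) for `C`. -/
noncomputable def ricciC (A B C : ℝ) : ℝ :=
  (2 / 3) * (-C ^ 2 * (2 * C + A - B) + C * (A + B) ^ 2)

/-- `(A, B, C)` is a positive solution of the normalized Ricci flow ODE system (⋆) on `I`. -/
def IsRicciSolOn (A B C : ℝ → ℝ) (I : Set ℝ) : Prop :=
  ∀ t ∈ I, 0 < A t ∧ 0 < B t ∧ 0 < C t ∧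
    HasDerivAt A (ricciA (A t) (B t) (C t)) t ∧
    HasDerivAt B (ricciB (A t) (B t) (C t)) t ∧
    HasDerivAt C (ricciC (A t) (B t) (C t)) t

lemma ricci_sum (a b c : ℝ) :
    ricciA a b c * b * c + a * ricciB a b c * c + a * b * ricciC a b c = 0 := by
  simp only [ricciA, ricciB, ricciC]; ring

/-- Along the normalized Ricci flow (⋆) on `SL(2,ℝ)`, the product `A B C` is constant. -/
theorem ricci_volume_constant (A B C : ℝ → ℝ) (I : Set ℝ)
    (hIopen : IsOpen I) (hIconn : I.OrdConnected) (h0 : (0 : ℝ) ∈ I)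
    (hsol : IsRicciSolOn A B C I) :
    ∀ t ∈ I, A t * B t * C t = A 0 * B 0 * C 0 := by
  have hderiv : ∀ t ∈ I, HasDerivAt (fun t => A t * B t * C t) 0 t := by
    intro t ht
    obtain ⟨_, _, _, hA, hB, hC⟩ := hsol t ht
    have := ((hA.mul hB).mul hC)
    have hsum := ricci_sum (A t) (B t) (C t)
    have e : (ricciA (A t) (B t) (C t) * B t + A t * ricciB (A t) (B t) (C t)) * C t + (A * B) t * ricciC (A t) (B t) (C t) = 0 := by
      show (ricciA (A t) (B t) (C t) * B t + A t * ricciB (A t) (B t) (C t)) * C t + A t * B t * ricciC (A t) (B t) (C t) = 0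
      linarith [hsum]
    rw [e] at this
    exact this
  have hconv : Convex ℝ I := hIconn.convex
  intro t ht
  refine hconv.is_const_of_fderivWithin_eq_zero (f := fun t => A t * B t * C t)
    (fun x hx => ((hderiv x hx).differentiableAt).differentiableWithinAt) ?_ ht h0
  intro x hx
  have h := (hderiv x hx).hasFDerivAt.hasFDerivWithinAt.fderivWithin
    (hIopen.uniqueDiffWithinAt hx)
  rw [h]
  ext
  simp
end

section
/- Let A, B, C be positive real-valued functions solving the normalized Ricci flow ODE system (⋆) on an open interval I containing 0. If B(0) ≥ C(0), then B(t) ≥ C(t) for all t ∈ I; moreover, if B(0) > C(0), then B(t) > C(t) for all t ∈ I. -/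
open Real Filter Set Topology

/-- Along the normalized Ricci flow (⋆) on `SL(2,ℝ)`, the ordering `B ≥ C` (resp. `B > C`)
at time `0` is preserved on the whole interval of definition. -/
theorem ricci_order_preserved (A B C : ℝ → ℝ) (I : Set ℝ)
    (hIopen : IsOpen I) (hIconn : I.OrdConnected) (h0 : (0 : ℝ) ∈ I)
    (hsol : IsRicciSolOn A B C I) (hBC : C 0 ≤ B 0) :
    (∀ t ∈ I, C t ≤ B t) ∧ (C 0 < B 0 → ∀ t ∈ I, C t < B t) := by
  set g : ℝ → ℝ := fun t =>
    (2 / 3) * ((A t) ^ 2 - A t * (B t + C t)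
      - 2 * ((B t) ^ 2 + B t * C t + (C t) ^ 2)) with hgdef
  have hgc : ∀ t ∈ I, ContinuousAt g t := by
    intro t ht
    have cA := (hsol t ht).2.2.2.1.continuousAt
    have cB := (hsol t ht).2.2.2.2.1.continuousAt
    have cC := (hsol t ht).2.2.2.2.2.continuousAt
    fun_prop
  have hgcOn : ContinuousOn g I := fun t ht => (hgc t ht).continuousWithinAt
  -- derivative of the difference
  have hD : ∀ t ∈ I, HasDerivAt (fun s => B s - C s) (g t * (B t - C t)) t := by
    intro t ht
    have := (hsol t ht).2.2.2.2.1.sub (hsol t ht).2.2.2.2.2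
    refine this.congr_deriv ?_
    simp only [ricciB, ricciC, hgdef]
    ring
  -- integrating factor
  set G : ℝ → ℝ := fun t => ∫ s in (0:ℝ)..t, g s with hGdef
  have hsub : ∀ t ∈ I, Set.uIcc (0:ℝ) t ⊆ I := fun t ht => hIconn.uIcc_subset h0 ht
  have hint : ∀ t ∈ I, IntervalIntegrable g MeasureTheory.volume 0 t := fun t ht =>
    (hgcOn.mono (hsub t ht)).intervalIntegrable
  have hG : ∀ t ∈ I, HasDerivAt G (g t) t := by
    intro t ht
    exact intervalIntegral.integral_hasDerivAt_right (hint t ht)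
      (hgcOn.stronglyMeasurableAtFilter hIopen t ht) (hgc t ht)
  have hG0 : G 0 = 0 := by simp [hGdef]
  set h : ℝ → ℝ := fun t => (B t - C t) * Real.exp (-(G t)) with hhdef
  have hh : ∀ t ∈ I, HasDerivAt h 0 t := by
    intro t ht
    have := (hD t ht).mul ((hG t ht).neg.exp)
    refine this.congr_deriv ?_
    ring
  have hconv : Convex ℝ I := hIconn.convex
  have hconst : ∀ t ∈ I, h t = h 0 := by
    intro t ht
    have key := hconv.norm_image_sub_le_of_norm_hasDerivWithin_le
      (f' := fun _ => (0:ℝ)) (fun x hx => (hh x hx).hasDerivWithinAt)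
      (by intro x _; rw [norm_zero] : ∀ x ∈ I, ‖(0:ℝ)‖ ≤ 0) h0 ht
    simp only [zero_mul, norm_le_zero_iff] at key
    linarith [sub_eq_zero.mp (by simpa using key)]
  have hform : ∀ t ∈ I, B t - C t = (B 0 - C 0) * Real.exp (G t) := by
    intro t ht
    have := hconst t ht
    simp only [hhdef, hG0, neg_zero, Real.exp_zero, mul_one] at this
    have hne : Real.exp (-(G t)) ≠ 0 := (Real.exp_pos _).ne'
    field_simp [Real.exp_neg] at this ⊢
    rw [← this, mul_assoc, ← Real.exp_add, neg_add_cancel, Real.exp_zero, mul_one]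
  constructor
  · intro t ht
    have := hform t ht
    nlinarith [Real.exp_pos (G t)]
  · intro hlt t ht
    have := hform t ht
    nlinarith [Real.exp_pos (G t)]
end

section
/- Let (A, B, C) be the maximal solution of the normalized Ricci flow ODE system (⋆) on (−T_b, T_f) with positive initial data satisfying B(0) ≥ C(0) and A(0)B(0)C(0) = 4. Then the maximal backward existence time is finite: T_b ∈ (0, ∞). -/
open Real Filter Set Topology

/-- The open interval `(-T_b, T_f)` of real times, where `T_b, T_f` are extended reals. -/
def flowInterval (Tb Tf : EReal) : Set ℝ :=
  {t : ℝ | -Tb < (t : EReal) ∧ (t : EReal) < Tf}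

/-- `(A, B, C)` is the maximal positive solution of the normalized Ricci flow ODE system (⋆)
on the interval `(-T_b, T_f)` containing `0`: it is a solution there, and any solution on a
larger interval of the same form which agrees with it must have the same interval. -/
def IsMaximalRicciSol (A B C : ℝ → ℝ) (Tb Tf : EReal) : Prop :=
  0 < Tb ∧ 0 < Tf ∧ IsRicciSolOn A B C (flowInterval Tb Tf) ∧
  ∀ (Tb' Tf' : EReal) (A' B' C' : ℝ → ℝ), Tb ≤ Tb' → Tf ≤ Tf' →
    IsRicciSolOn A' B' C' (flowInterval Tb' Tf') →
    (∀ t ∈ flowInterval Tb Tf, A' t = A t ∧ B' t = B t ∧ C' t = C t) →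
    Tb' = Tb ∧ Tf' = Tf

lemma key_ineq {a b c : ℝ} (ha : 0 < a) (hb : 0 < b) (hc : 0 < c) (hcb : c ≤ b) :
    ricciA a b c + ricciB a b c - ricciC a b c ≤ -(1/12) * (a + b - c)^3 := by
  simp only [ricciA, ricciB, ricciC]
  nlinarith [mul_nonneg (sq_nonneg (a - b + c)) (by linarith : (0:ℝ) ≤ a + b - c),
    mul_nonneg (mul_nonneg ha.le hc.le) (by linarith : (0:ℝ) ≤ b - c),
    mul_nonneg (mul_nonneg hb.le hc.le) (by linarith : (0:ℝ) ≤ b - c),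
    mul_pos (mul_pos ha ha) hc, pow_pos ha 3,
    mul_nonneg (mul_nonneg (by linarith : (0:ℝ) ≤ b - c) (by linarith : (0:ℝ) ≤ b - c)) (by linarith : (0:ℝ) ≤ b - c)]

/-- Backward behavior of the normalized Ricci flow on `SL(2,ℝ)`: the maximal backward
existence time `T_b` is finite, i.e. `T_b ∈ (0, ∞)`. -/
theorem ricci_backward_time_finite (A B C : ℝ → ℝ) (Tb Tf : EReal)
    (hmax : IsMaximalRicciSol A B C Tb Tf)
    (hBC : C 0 ≤ B 0) (hnorm : A 0 * B 0 * C 0 = 4) :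
    0 < Tb ∧ Tb < ⊤ := by
  obtain ⟨hTb, hTf, hsol, -⟩ := hmax
  refine ⟨hTb, ?_⟩
  by_contra hTop
  have hTbtop : Tb = ⊤ := top_le_iff.mp (not_lt.mp hTop)
  subst hTbtop
  set U : Set ℝ := flowInterval ⊤ Tf with hU
  have hUeq : U = ((↑) : ℝ → EReal) ⁻¹' (Set.Iio Tf) := by
    ext t
    simp only [hU, flowInterval, Set.mem_setOf_eq, Set.mem_preimage, Set.mem_Iio,
      EReal.neg_top, and_iff_right_iff_imp]
    exact fun _ => EReal.bot_lt_coe t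
  have hUopen : IsOpen U := by
    rw [hUeq]; exact isOpen_Iio.preimage continuous_coe_real_ereal
  have hIic : Set.Iic (0:ℝ) ⊆ U := by
    intro t ht
    rw [hUeq]
    exact lt_of_le_of_lt (by exact_mod_cast (ht : t ≤ 0)) hTf
  -- continuity on U
  have hcA : ContinuousOn A U := fun t ht =>
    ((hsol t ht).2.2.2.1.continuousAt).continuousWithinAt
  have hcB : ContinuousOn B U := fun t ht =>
    ((hsol t ht).2.2.2.2.1.continuousAt).continuousWithinAt
  have hcC : ContinuousOn C U := fun t ht =>
    ((hsol t ht).2.2.2.2.2.continuousAt).continuousWithinAt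
  -- the difference x = B - C satisfies a linear ODE x' = g x
  set g : ℝ → ℝ := fun t =>
    (2/3) * ((A t)^2 - A t * (B t + C t) - 2*((B t)^2 + B t * C t + (C t)^2)) with hgdef
  set x : ℝ → ℝ := fun t => B t - C t with hxdef
  have hx' : ∀ t ∈ U, HasDerivAt x (g t * x t) t := by
    intro t ht
    obtain ⟨-, -, -, -, hB', hC'⟩ := hsol t ht
    have h := hB'.sub hC'
    refine h.congr_deriv ?_
    simp only [hgdef, hxdef, ricciB, ricciC]
    ring
  have hcg : ContinuousOn g U := by
    apply continuousOn_const.mul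
    exact ((hcA.pow 2).sub (hcA.mul (hcB.add hcC))).sub
      (continuousOn_const.mul (((hcB.pow 2).add (hcB.mul hcC)).add (hcC.pow 2)))
  -- integrating factor
  set G : ℝ → ℝ := fun u => ∫ s in (0:ℝ)..u, g s with hGdef
  have hG : ∀ t ∈ Set.Iic (0:ℝ), HasDerivAt G (g t) t := by
    intro t ht
    apply intervalIntegral.integral_hasDerivAt_right
    · apply ContinuousOn.intervalIntegrable
      apply hcg.mono
      refine subset_trans ?_ hIic
      rw [Set.uIcc_of_ge (ht : t ≤ 0)]
      exact Set.Icc_subset_Iic_self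
    · exact hcg.stronglyMeasurableAtFilter hUopen t (hIic ht)
    · exact (hcg t (hIic ht)).continuousAt (hUopen.mem_nhds (hIic ht))
  set w : ℝ → ℝ := fun u => x u * Real.exp (-G u) with hwdef
  have hw : ∀ t ∈ Set.Iic (0:ℝ), HasDerivAt w 0 t := by
    intro t ht
    have h1 := hx' t (hIic ht)
    have h2 : HasDerivAt (fun u => Real.exp (-G u)) (Real.exp (-G t) * (-g t)) t :=
      ((hG t ht).neg).exp
    have h3 := h1.mul h2
    refine h3.congr_deriv ?_
    ring
  have hwconst : ∀ t ∈ Set.Iic (0:ℝ), w 0 = w t := by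
    intro t ht
    have hc : ContinuousOn w (Set.Icc t 0) := fun s hs =>
      ((hw s (Set.Icc_subset_Iic_self hs)).continuousAt).continuousWithinAt
    have hd : ∀ s ∈ Set.Ico t 0, HasDerivWithinAt w 0 (Set.Ici s) s := fun s hs =>
      (hw s (le_of_lt hs.2)).hasDerivWithinAt
    exact constant_of_has_deriv_right_zero hc hd 0 (Set.right_mem_Icc.mpr ht)
  have hxsign : ∀ t ∈ Set.Iic (0:ℝ), 0 ≤ x t := by
    intro t ht
    by_contra h
    push_neg at h
    have h1 : x t * Real.exp (-G t) < 0 := mul_neg_of_neg_of_pos h (Real.exp_pos _)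
    have h0 : w 0 = x 0 := by
      simp [hwdef, hGdef, intervalIntegral.integral_same]
    have h2 : x 0 < 0 := by
      rw [← h0, hwconst t ht]
      exact h1
    have : (0:ℝ) ≤ x 0 := by simp only [hxdef]; linarith
    linarith
  -- the quantity Q = A + B - C blows up backwards
  set Q : ℝ → ℝ := fun t => A t + B t - C t with hQdef
  have hQpos : ∀ t ∈ Set.Iic (0:ℝ), 0 < Q t := by
    intro t ht
    have h1 := hxsign t ht
    have h2 := (hsol t (hIic ht)).1
    simp only [hxdef] at h1
    simp only [hQdef]
    linarith
  have hQ' : ∀ t ∈ Set.Iic (0:ℝ), ∃ q, HasDerivAt Q q t ∧ q ≤ -(1/12) * (Q t)^3 := by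
    intro t ht
    obtain ⟨ha, hb, hc, hA', hB', hC'⟩ := hsol t (hIic ht)
    refine ⟨_, (hA'.add hB').sub hC', ?_⟩
    have hbc : C t ≤ B t := by
      have := hxsign t ht; simp only [hxdef] at this; linarith
    exact key_ineq ha hb hc hbc
  set r : ℝ → ℝ := fun u => (Q (-u))⁻¹ with hrdef
  have hrpos : ∀ u : ℝ, 0 ≤ u → 0 < r u := fun u hu =>
    inv_pos.mpr (hQpos (-u) (neg_nonpos.mpr hu))
  have hφ : ∀ u : ℝ, 0 ≤ u → ∃ d, HasDerivAt (fun v => r v * r v) d u ∧ d ≤ -1/6 := by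
    intro u hu
    have hmem : -u ∈ Set.Iic (0:ℝ) := neg_nonpos.mpr hu
    obtain ⟨q, hq, hqle⟩ := hQ' (-u) hmem
    have hQp : 0 < Q (-u) := hQpos _ hmem
    have h1 : HasDerivAt (fun v : ℝ => Q (-v)) (q * (-1)) u := hq.comp u (hasDerivAt_neg u)
    have h2 : HasDerivAt r (-(q * (-1)) / (Q (-u))^2) u := h1.inv hQp.ne'
    refine ⟨_, h2.mul h2, ?_⟩
    have hQ3 : 0 < (Q (-u))^3 := pow_pos hQp 3
    have heq : (-(q * (-1)) / (Q (-u))^2) * r u + r u * (-(q * (-1)) / (Q (-u))^2)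
        = 2 * q / (Q (-u))^3 := by
      simp only [hrdef]
      field_simp
      ring
    rw [heq, div_le_iff₀ hQ3]
    nlinarith
  set ψ : ℝ → ℝ := fun u => r u * r u + u / 6 with hψdef
  have hψderiv : ∀ u : ℝ, 0 ≤ u → ∃ d, HasDerivAt ψ d u ∧ d ≤ 0 := by
    intro u hu
    obtain ⟨d, hd, hdle⟩ := hφ u hu
    refine ⟨d + 1/6, hd.add ((hasDerivAt_id u).div_const 6), by linarith⟩
  have hanti : AntitoneOn ψ (Set.Ici (0:ℝ)) := by
    apply antitoneOn_of_deriv_nonpos (convex_Ici 0)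
    · intro u hu
      obtain ⟨d, hd, -⟩ := hψderiv u hu
      exact hd.continuousAt.continuousWithinAt
    · intro u hu
      rw [interior_Ici] at hu
      obtain ⟨d, hd, -⟩ := hψderiv u hu.le
      exact hd.differentiableAt.differentiableWithinAt
    · intro u hu
      rw [interior_Ici] at hu
      obtain ⟨d, hd, hdle⟩ := hψderiv u hu.le
      rw [hd.deriv]; exact hdle
  have hr0 : 0 < r 0 := hrpos 0 le_rfl
  set u0 : ℝ := 6 * (r 0 * r 0) + 6 with hu0def
  have hu0pos : 0 < u0 := by nlinarith
  have hmono : ψ u0 ≤ ψ 0 := hanti (Set.self_mem_Ici) (le_of_lt hu0pos) hu0pos.le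
  have hru0 : 0 < r u0 := hrpos u0 hu0pos.le
  simp only [hψdef, hu0def] at hmono
  nlinarith [mul_pos hru0 hru0]
end
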